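/- Let a > 0, θ̃ = (a+1)^2/(a^2+3a+1), τ̃ = a(a+1)/(a^2+3a+1), and let 0 < τ < θ < 1 with (θ,τ) ≠ (θ̃,τ̃). Let φ ∈ C([−1,0]) satisfy φ(t) < 0 on [−1,−θ), φ(−θ) = 0, φ(t) > 0 on (−θ,−τ), φ(−τ) = 0, φ(t) < 0 on (−τ,0), and φ(0) = 0. If x : [−1,∞) → ℝ is a solution of the relay equation ẋ(t) = R(x(t−1)) with initial function φ, then there exists t̃ ≥ 0 such that x(t) = x0(t − t̃) for all t ≥ t̃, where x0 is the T0-periodic function with x0(t) = t on [0,1], x0(t) = −a(t − t0) on [1, t0+1], x0(t) = t − T0 on [t0+1, T0]. -/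

import Mathlib

/-- The relay nonlinearity: `R a x = 1` if `x ≤ 0`, and `R a x = -a` if `x > 0`. -/
noncomputable def R (a x : ℝ) : ℝ := if x ≤ 0 then 1 else -a

/-- `x : [-1,∞) → ℝ` is a solution of the relay equation `x'(t) = R a (x (t-1))`
with initial function `φ ∈ C([-1,0])`: `x` is continuous on `[-1,∞)`, coincides
with `φ` on `[-1,0]`, and for every `t > 0` outside an exceptional set having
finitely many points in each bounded interval, `x` is differentiable at `t` with
`x'(t) = R a (x (t-1))`. -/
def IsSolution (a : ℝ) (φ x : ℝ → ℝ) : Prop :=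
  ContinuousOn x (Set.Ici (-1 : ℝ)) ∧
  (∀ t ∈ Set.Icc (-1 : ℝ) 0, x t = φ t) ∧
  ∃ S : Set ℝ, (∀ A B : ℝ, (S ∩ Set.Icc A B).Finite) ∧
    ∀ t : ℝ, 0 < t → t ∉ S → HasDerivAt x (R a (x (t - 1))) t

set_option maxHeartbeats 2000000

open Set

lemma aff_noexc {x : ℝ → ℝ} {k c d : ℝ} (hcd : c ≤ d)
    (hc : ContinuousOn x (Set.Icc c d))
    (hd : ∀ t ∈ Set.Ioo c d, HasDerivAt x k t) :
    ∀ t ∈ Set.Icc c d, x t = x c + k * (t - c) := by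
  rcases eq_or_lt_of_le hcd with rfl | hlt
  · intro t ht
    have : t = c := le_antisymm ht.2 ht.1
    subst this; ring
  set g : ℝ → ℝ := fun t => x t - k * t with hg
  have gcont : ContinuousOn g (Set.Icc c d) :=
    hc.sub ((continuous_const.mul continuous_id).continuousOn)
  have key : ∀ c' ∈ Set.Ioo c d, ∀ t ∈ Set.Icc c' d, g t = g c' := by
    intro c' hc' t ht
    refine constant_of_has_deriv_right_zero
      (gcont.mono (Icc_subset_Icc hc'.1.le le_rfl)) (fun y hy => ?_) t ht
    have hy' : y ∈ Set.Ioo c d := ⟨lt_of_lt_of_le hc'.1 hy.1, hy.2⟩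
    have h1 : HasDerivAt g (k - k) y := by
      have := (hd y hy').sub (((hasDerivAt_id y).const_mul k))
      exact this.congr_deriv (by ring)
    simpa using h1.hasDerivWithinAt
  have hval : ∀ t ∈ Set.Ioc c d, g t = g d := by
    intro t ht
    rcases eq_or_lt_of_le ht.2 with rfl | h2
    · rfl
    · exact ((key t ⟨ht.1, h2⟩ d ⟨h2.le, le_rfl⟩)).symm
  have h1 : Filter.Tendsto g (nhdsWithin c (Set.Ioc c d)) (nhds (g c)) :=
    (gcont c ⟨le_rfl, hcd⟩).mono Set.Ioc_subset_Icc_self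
  have h2 : Filter.Tendsto g (nhdsWithin c (Set.Ioc c d)) (nhds (g d)) := by
    refine Filter.Tendsto.congr' ?_ tendsto_const_nhds
    filter_upwards [self_mem_nhdsWithin] with t ht using (hval t ht).symm
  have hne : (nhdsWithin c (Set.Ioc c d)).NeBot := by
    rw [← mem_closure_iff_nhdsWithin_neBot, closure_Ioc hlt.ne]
    exact ⟨le_rfl, hcd⟩
  have hgc : g c = g d := tendsto_nhds_unique h1 h2
  intro t ht
  rcases eq_or_lt_of_le ht.1 with rfl | h
  · ring
  · have := hval t ⟨h, ht.2⟩
    rw [hgc.symm] at this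
    simp only [hg] at this
    linarith

lemma aff_fin {x : ℝ → ℝ} {k : ℝ} (F : Finset ℝ) :
    ∀ c d : ℝ, c ≤ d → ContinuousOn x (Set.Icc c d) →
    (∀ t ∈ Set.Ioo c d, t ∉ F → HasDerivAt x k t) →
    ∀ t ∈ Set.Icc c d, x t = x c + k * (t - c) := by
  classical
  induction F using Finset.strongInductionOn with
  | _ F ih =>
    intro c d hcd hc hd
    by_cases hex : ∃ e ∈ F, e ∈ Set.Ioo c d
    · obtain ⟨e, heF, he⟩ := hex
      have h1 : ∀ t ∈ Set.Icc c e, x t = x c + k * (t - c) := by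
        refine ih (F.erase e) (Finset.erase_ssubset heF) c e he.1.le
          (hc.mono (Icc_subset_Icc le_rfl he.2.le)) (fun t ht htF => ?_)
        refine hd t ⟨ht.1, ht.2.trans he.2⟩ (fun hF => htF ?_)
        exact Finset.mem_erase.2 ⟨ne_of_lt ht.2, hF⟩
      have h2 : ∀ t ∈ Set.Icc e d, x t = x e + k * (t - e) := by
        refine ih (F.erase e) (Finset.erase_ssubset heF) e d he.2.le
          (hc.mono (Icc_subset_Icc he.1.le le_rfl)) (fun t ht htF => ?_)
        refine hd t ⟨he.1.trans ht.1, ht.2⟩ (fun hF => htF ?_)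
        exact Finset.mem_erase.2 ⟨(ne_of_lt ht.1).symm, hF⟩
      intro t ht
      rcases le_total t e with h | h
      · exact h1 t ⟨ht.1, h⟩
      · have := h2 t ⟨h, ht.2⟩
        have he' := h1 e ⟨he.1.le, le_rfl⟩
        rw [this, he']; ring
    · refine aff_noexc hcd hc (fun t ht => hd t ht (fun hF => hex ⟨t, hF, ht⟩))

section pieces
variable {a : ℝ} {x : ℝ → ℝ} {S : Set ℝ}

lemma piece (hS : ∀ A B : ℝ, (S ∩ Set.Icc A B).Finite)
    (hder : ∀ t : ℝ, 0 < t → t ∉ S → HasDerivAt x (R a (x (t - 1))) t)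
    (hcont : ContinuousOn x (Set.Ici (-1 : ℝ)))
    {k c d : ℝ} (hc0 : 0 ≤ c) (hcd : c ≤ d) (F : Finset ℝ)
    (hsgn : ∀ t ∈ Set.Ioo c d, t ∉ F → R a (x (t - 1)) = k) :
    ∀ t ∈ Set.Icc c d, x t = x c + k * (t - c) := by
  classical
  have hfin : (S ∩ Set.Icc c d).Finite := hS c d
  refine aff_fin (F ∪ hfin.toFinset) c d hcd
    (hcont.mono (fun t ht => le_trans (by linarith) ht.1)) (fun t ht htF => ?_)
  have htS : t ∉ S := by
    intro hts
    exact htF (Finset.mem_union_right _ (hfin.mem_toFinset.2 ⟨hts, ht.1.le, ht.2.le⟩))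
  have htF' : t ∉ F := fun h => htF (Finset.mem_union_left _ h)
  have := hder t (lt_of_le_of_lt hc0 ht.1) htS
  rwa [hsgn t ht htF'] at this

lemma piece_up (hS : ∀ A B : ℝ, (S ∩ Set.Icc A B).Finite)
    (hder : ∀ t : ℝ, 0 < t → t ∉ S → HasDerivAt x (R a (x (t - 1))) t)
    (hcont : ContinuousOn x (Set.Ici (-1 : ℝ)))
    {c d : ℝ} (hc0 : 0 ≤ c) (hcd : c ≤ d)
    (hsgn : ∀ t ∈ Set.Ioo c d, x (t - 1) ≤ 0) :
    ∀ t ∈ Set.Icc c d, x t = x c + (t - c) := by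
  have := piece hS hder hcont hc0 hcd (∅ : Finset ℝ)
    (fun t ht _ => by rw [R, if_pos (hsgn t ht)])
  intro t ht; have := this t ht; linarith

lemma piece_down (hS : ∀ A B : ℝ, (S ∩ Set.Icc A B).Finite)
    (hder : ∀ t : ℝ, 0 < t → t ∉ S → HasDerivAt x (R a (x (t - 1))) t)
    (hcont : ContinuousOn x (Set.Ici (-1 : ℝ)))
    {c d : ℝ} (hc0 : 0 ≤ c) (hcd : c ≤ d) (F : Finset ℝ)
    (hsgn : ∀ t ∈ Set.Ioo c d, t ∉ F → 0 < x (t - 1)) :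
    ∀ t ∈ Set.Icc c d, x t = x c - a * (t - c) := by
  have := piece hS hder hcont hc0 hcd F
    (fun t ht htF => by rw [R, if_neg (not_le.2 (hsgn t ht htF))])
  intro t ht; have := this t ht; linarith

end pieces

section da
variable {a : ℝ} {x : ℝ → ℝ} {S : Set ℝ}

/-- Descent: if `x > 0` on `(c-1,c)` (except possibly at `p`) and `x c = v > 0`,
then `x` descends with slope `-a` on `[c, c + v/a + 1]`. -/
lemma descend (ha : 0 < a) (hS : ∀ A B : ℝ, (S ∩ Set.Icc A B).Finite)
    (hder : ∀ t : ℝ, 0 < t → t ∉ S → HasDerivAt x (R a (x (t - 1))) t)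
    (hcont : ContinuousOn x (Set.Ici (-1 : ℝ))) :
    ∀ n : ℕ, ∀ c v p : ℝ, 0 ≤ c → 0 < v → v ≤ n * a →
      (∀ t ∈ Set.Ioo (c - 1) c, t ≠ p → 0 < x t) → x c = v →
      ∀ t ∈ Set.Icc c (c + v / a + 1), x t = v - a * (t - c) := by
  intro n
  induction n with
  | zero => intro c v p _ hv hva _ _; simp at hva; linarith
  | succ n ih =>
    intro c v p hc hv hva hw hxc
    have h1 : ∀ t ∈ Set.Icc c (c + 1), x t = v - a * (t - c) := by
      have := piece_down hS hder hcont hc (by linarith : c ≤ c + 1) ({p + 1} : Finset ℝ)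
        (fun t ht htF => hw (t - 1) ⟨by linarith [ht.1], by linarith [ht.2]⟩
          (fun h => htF (by simp [Finset.mem_singleton]; linarith)))
      intro t ht; have := this t ht; rw [hxc] at this; linarith
    by_cases hva1 : v ≤ a
    · have hz1 : v / a ≤ 1 := (div_le_one ha).2 hva1
      have hz0 : 0 < v / a := div_pos hv ha
      have hx1 : x (c + 1) = v - a := by
        have := h1 (c + 1) ⟨by linarith, le_rfl⟩; linarith
      have h2 : ∀ t ∈ Set.Icc (c + 1) (c + v / a + 1), x t = v - a * (t - c) := by
        have := piece_down hS hder hcont (by linarith : (0:ℝ) ≤ c + 1)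
          (by linarith : c + 1 ≤ c + v / a + 1) (∅ : Finset ℝ)
          (fun t ht _ => by
            have h1' := h1 (t - 1) ⟨by linarith [ht.1], by linarith [ht.2, hz1]⟩
            have htz : t - 1 < c + v / a := by linarith [ht.2]
            have : a * (t - 1 - c) < a * (v / a) := by
              apply mul_lt_mul_of_pos_left _ ha; linarith
            rw [mul_div_cancel₀ _ (ne_of_gt ha)] at this
            linarith)
        intro t ht; have := this t ht; rw [hx1] at this; linarith
      intro t ht
      rcases le_total t (c + 1) with h | h
      · exact h1 t ⟨ht.1, h⟩
      · exact h2 t ⟨h, ht.2⟩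
    · push_neg at hva1
      have hx1 : x (c + 1) = v - a := by
        have := h1 (c + 1) ⟨by linarith, le_rfl⟩; linarith
      have h2 := ih (c + 1) (v - a) p (by linarith) (by linarith)
        (by push_cast at hva ⊢; linarith)
        (fun t ht _ => by
          have := h1 t ⟨by linarith [ht.1], by linarith [ht.2]⟩
          have : x t = v - a * (t - c) := this
          nlinarith [ht.2]) hx1
      intro t ht
      rcases le_total t (c + 1) with h | h
      · exact h1 t ⟨ht.1, h⟩
      · have hend : c + 1 + (v - a) / a + 1 = c + v / a + 1 := by
          field_simp; ring
        have := h2 t ⟨h, by rw [hend]; exact ht.2⟩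
        linarith

/-- Ascent: if `x ≤ 0` on `(c-1,c)` and `x c = v < 0`, then `x` ascends with
slope `1` on `[c, c - v + 1]`. -/
lemma ascend (ha : 0 < a) (hS : ∀ A B : ℝ, (S ∩ Set.Icc A B).Finite)
    (hder : ∀ t : ℝ, 0 < t → t ∉ S → HasDerivAt x (R a (x (t - 1))) t)
    (hcont : ContinuousOn x (Set.Ici (-1 : ℝ))) :
    ∀ n : ℕ, ∀ c v : ℝ, 0 ≤ c → v < 0 → -v ≤ n →
      (∀ t ∈ Set.Ioo (c - 1) c, x t ≤ 0) → x c = v →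
      ∀ t ∈ Set.Icc c (c - v + 1), x t = v + (t - c) := by
  intro n
  induction n with
  | zero => intro c v _ hv hvn _ _; simp at hvn; linarith
  | succ n ih =>
    intro c v hc hv hvn hw hxc
    have h1 : ∀ t ∈ Set.Icc c (c + 1), x t = v + (t - c) := by
      have := piece_up hS hder hcont hc (by linarith : c ≤ c + 1)
        (fun t ht => hw (t - 1) ⟨by linarith [ht.1], by linarith [ht.2]⟩)
      intro t ht; have := this t ht; rw [hxc] at this; linarith
    by_cases hv1 : -v ≤ 1
    · have hx1 : x (c + 1) = v + 1 := by
        have := h1 (c + 1) ⟨by linarith, le_rfl⟩; linarith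
      have h2 : ∀ t ∈ Set.Icc (c + 1) (c - v + 1), x t = v + (t - c) := by
        have := piece_up hS hder hcont (by linarith : (0:ℝ) ≤ c + 1)
          (by linarith : c + 1 ≤ c - v + 1)
          (fun t ht => by
            have := h1 (t - 1) ⟨by linarith [ht.1], by linarith [ht.2]⟩
            have htz : t - 1 < c - v := by linarith [ht.2]
            linarith)
        intro t ht; have := this t ht; rw [hx1] at this; linarith
      intro t ht
      rcases le_total t (c + 1) with h | h
      · exact h1 t ⟨ht.1, h⟩
      · exact h2 t ⟨h, ht.2⟩
    · push_neg at hv1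
      have hx1 : x (c + 1) = v + 1 := by
        have := h1 (c + 1) ⟨by linarith, le_rfl⟩; linarith
      have h2 := ih (c + 1) (v + 1) (by linarith) (by linarith)
        (by push_cast at hvn ⊢; linarith)
        (fun t ht => by
          have := h1 t ⟨by linarith [ht.1], by linarith [ht.2]⟩
          linarith [ht.2]) hx1
      intro t ht
      rcases le_total t (c + 1) with h | h
      · exact h1 t ⟨ht.1, h⟩
      · have := h2 t ⟨h, by linarith [ht.2]⟩
        linarith
end da

section tail
variable {a t0 T0 : ℝ} {x x0 : ℝ → ℝ} {S : Set ℝ}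

/-- One full period of the merged solution. -/
lemma tail_step (ha : 0 < a) (hS : ∀ A B : ℝ, (S ∩ Set.Icc A B).Finite)
    (hder : ∀ t : ℝ, 0 < t → t ∉ S → HasDerivAt x (R a (x (t - 1))) t)
    (hcont : ContinuousOn x (Set.Ici (-1 : ℝ)))
    (ht0 : t0 = (a + 1) / a) (hT0 : T0 = (a + 1) ^ 2 / a)
    (hx0a : ∀ t ∈ Set.Icc (0 : ℝ) 1, x0 t = t)
    (hx0b : ∀ t ∈ Set.Icc (1 : ℝ) (t0 + 1), x0 t = -a * (t - t0))
    (hx0c : ∀ t ∈ Set.Icc (t0 + 1) T0, x0 t = t - T0)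
    (σ : ℝ) (hσ : 0 ≤ σ) (h0 : x σ = 0)
    (hw : ∀ t ∈ Set.Ioo (σ - 1) σ, x t ≤ 0) :
    (∀ t ∈ Set.Icc σ (σ + T0), x t = x0 (t - σ)) ∧ x (σ + T0) = 0 ∧
      (∀ t ∈ Set.Ioo (σ + T0 - 1) (σ + T0), x t ≤ 0) := by
  have ha' : a ≠ 0 := ne_of_gt ha
  have ht0v : a * t0 = a + 1 := by rw [ht0]; field_simp
  have ht01 : 1 < t0 := by rw [ht0]; rw [lt_div_iff₀ ha]; linarith
  have hT0v : T0 = t0 + 1 + a := by rw [hT0, ht0]; field_simp; ring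
  -- piece 1 : slope 1 on [σ, σ+1]
  have h1 : ∀ t ∈ Set.Icc σ (σ + 1), x t = t - σ := by
    have := piece_up hS hder hcont hσ (by linarith : σ ≤ σ + 1)
      (fun t ht => hw (t - 1) ⟨by linarith [ht.1], by linarith [ht.2]⟩)
    intro t ht; have := this t ht; rw [h0] at this; linarith
  -- descend from σ+1 with value 1
  obtain ⟨n, hn⟩ := exists_nat_ge (1 / a)
  have hna : (1 : ℝ) ≤ n * a := by rw [div_le_iff₀ ha] at hn; linarith
  have hx1 : x (σ + 1) = 1 := by have := h1 (σ + 1) ⟨by linarith, le_rfl⟩; linarith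
  have h2' := descend ha hS hder hcont n (σ + 1) 1 σ (by linarith) one_pos hna
    (fun t ht _ => by have := h1 t ⟨by linarith [ht.1], by linarith [ht.2]⟩; linarith [ht.1])
    hx1
  have hend2 : σ + 1 + 1 / a + 1 = σ + t0 + 1 := by rw [ht0]; field_simp; ring
  have h2 : ∀ t ∈ Set.Icc (σ + 1) (σ + t0 + 1), x t = 1 - a * (t - σ - 1) := by
    intro t ht
    have := h2' t ⟨ht.1, by rw [hend2]; exact ht.2⟩
    linarith [this]
  have hxt01 : x (σ + t0 + 1) = -a := by
    have := h2 (σ + t0 + 1) ⟨by linarith, le_rfl⟩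
    rw [this]; nlinarith [ht0v]
  -- ascend from σ+t0+1 with value -a
  obtain ⟨n', hn'⟩ := exists_nat_ge a
  have h3' := ascend ha hS hder hcont n' (σ + t0 + 1) (-a) (by linarith)
    (by linarith) (by simpa using hn')
    (fun t ht => by
      have := h2 t ⟨by linarith [ht.1], by linarith [ht.2]⟩
      have h' : σ + t0 < t := by linarith [ht.1]
      nlinarith [ht0v])
    hxt01
  have h3 : ∀ t ∈ Set.Icc (σ + t0 + 1) (σ + T0), x t = t - σ - T0 := by
    intro t ht
    have := h3' t ⟨ht.1, by linarith [ht.2, hT0v.le, hT0v.ge]⟩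
    rw [this]; rw [hT0v]; ring
  refine ⟨?_, ?_, ?_⟩
  · intro t ht
    rcases le_total t (σ + 1) with hA | hA
    · rw [h1 t ⟨ht.1, hA⟩, hx0a (t - σ) ⟨by linarith [ht.1], by linarith⟩]
    · rcases le_total t (σ + t0 + 1) with hB | hB
      · rw [h2 t ⟨hA, hB⟩, hx0b (t - σ) ⟨by linarith, by linarith⟩]
        nlinarith [ht0v]
      · rw [h3 t ⟨hB, ht.2⟩, hx0c (t - σ) ⟨by linarith, by linarith [ht.2]⟩]
  · have := h3 (σ + T0) ⟨by rw [hT0v]; linarith, le_rfl⟩; linarith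
  · intro t ht
    rcases le_total t (σ + t0 + 1) with hB | hB
    · have := h2 t ⟨by rw [hT0v] at ht; linarith [ht.1], hB⟩
      rw [this]
      have : σ + t0 < t := by rw [hT0v] at ht; linarith [ht.1]
      nlinarith [ht0v]
    · have := h3 t ⟨hB, (ht.2).le⟩
      rw [this]; linarith [ht.2]
end tail

lemma x0_per_nat {T0 : ℝ} {x0 : ℝ → ℝ} (hx0per : ∀ t : ℝ, x0 (t + T0) = x0 t) :
    ∀ (m : ℕ) (u : ℝ), x0 (u + m * T0) = x0 u := by
  intro m
  induction m with
  | zero => simp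
  | succ m ih =>
    intro u
    have : u + (m + 1 : ℕ) * T0 = (u + m * T0) + T0 := by push_cast; ring
    rw [this, hx0per, ih]

lemma tail {a t0 T0 : ℝ} {x x0 : ℝ → ℝ} {S : Set ℝ}
    (ha : 0 < a) (hS : ∀ A B : ℝ, (S ∩ Set.Icc A B).Finite)
    (hder : ∀ t : ℝ, 0 < t → t ∉ S → HasDerivAt x (R a (x (t - 1))) t)
    (hcont : ContinuousOn x (Set.Ici (-1 : ℝ)))
    (ht0 : t0 = (a + 1) / a) (hT0 : T0 = (a + 1) ^ 2 / a)
    (hx0per : ∀ t : ℝ, x0 (t + T0) = x0 t)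
    (hx0a : ∀ t ∈ Set.Icc (0 : ℝ) 1, x0 t = t)
    (hx0b : ∀ t ∈ Set.Icc (1 : ℝ) (t0 + 1), x0 t = -a * (t - t0))
    (hx0c : ∀ t ∈ Set.Icc (t0 + 1) T0, x0 t = t - T0)
    (σ : ℝ) (hσ : 0 ≤ σ) (h0 : x σ = 0)
    (hw : ∀ t ∈ Set.Ioo (σ - 1) σ, x t ≤ 0) :
    ∀ t : ℝ, σ ≤ t → x t = x0 (t - σ) := by
  have hT0pos : 0 < T0 := by rw [hT0]; positivity
  have aux : ∀ m : ℕ, x (σ + m * T0) = 0 ∧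
      (∀ t ∈ Set.Ioo (σ + m * T0 - 1) (σ + m * T0), x t ≤ 0) := by
    intro m
    induction m with
    | zero =>
      constructor
      · simpa using h0
      · intro t ht
        simp only [Nat.cast_zero, zero_mul, add_zero] at ht
        exact hw t ht
    | succ m ih =>
      have hs := tail_step ha hS hder hcont ht0 hT0 hx0a hx0b hx0c (σ + m * T0)
        (add_nonneg hσ (by positivity)) ih.1 ih.2
      have he : σ + (m + 1 : ℕ) * T0 = σ + m * T0 + T0 := by push_cast; ring
      rw [he]
      exact ⟨hs.2.1, hs.2.2⟩
  intro t htσ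
  set m : ℕ := ⌊(t - σ) / T0⌋₊ with hm
  have hfr : (m : ℝ) ≤ (t - σ) / T0 := Nat.floor_le (div_nonneg (by linarith) hT0pos.le)
  have hfr2 : (t - σ) / T0 < m + 1 := Nat.lt_floor_add_one _
  have hml : σ + m * T0 ≤ t := by
    have := (le_div_iff₀ hT0pos).1 hfr
    linarith
  have hmu : t ≤ σ + m * T0 + T0 := by
    have := (div_lt_iff₀ hT0pos).1 hfr2
    linarith
  obtain ⟨hval, -, -⟩ := tail_step ha hS hder hcont ht0 hT0 hx0a hx0b hx0c (σ + m * T0)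
    (add_nonneg hσ (by positivity)) (aux m).1 (aux m).2
  have := hval t ⟨hml, hmu⟩
  rw [this]
  have : t - σ = (t - (σ + m * T0)) + m * T0 := by ring
  rw [this, x0_per_nat hx0per]

lemma main_ind {a t0 T0 θt τt : ℝ} {x x0 : ℝ → ℝ} {S : Set ℝ}
    (ha : 0 < a) (hS : ∀ A B : ℝ, (S ∩ Set.Icc A B).Finite)
    (hder : ∀ t : ℝ, 0 < t → t ∉ S → HasDerivAt x (R a (x (t - 1))) t)
    (hcont : ContinuousOn x (Set.Ici (-1 : ℝ)))
    (ht0 : t0 = (a + 1) / a) (hT0 : T0 = (a + 1) ^ 2 / a)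
    (hθt : θt = (a + 1) ^ 2 / (a ^ 2 + 3 * a + 1))
    (hτt : τt = a * (a + 1) / (a ^ 2 + 3 * a + 1))
    (hx0per : ∀ t : ℝ, x0 (t + T0) = x0 t)
    (hx0a : ∀ t ∈ Set.Icc (0 : ℝ) 1, x0 t = t)
    (hx0b : ∀ t ∈ Set.Icc (1 : ℝ) (t0 + 1), x0 t = -a * (t - t0))
    (hx0c : ∀ t ∈ Set.Icc (t0 + 1) T0, x0 t = t - T0) :
    ∀ n : ℕ, ∀ s θ τ : ℝ, 0 ≤ s → 0 < τ → τ < θ → θ < 1 →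
      1 ≤ T0 ^ n * max |θ - θt| |τ - τt| →
      x (s - θ) = 0 → x (s - τ) = 0 → x s = 0 →
      (∀ t : ℝ, s - 1 ≤ t → t < s - θ → x t < 0) →
      (∀ t : ℝ, s - θ < t → t < s - τ → 0 < x t) →
      (∀ t : ℝ, s - τ < t → t < s → x t < 0) →
      ∃ tt : ℝ, 0 ≤ tt ∧ ∀ t : ℝ, tt ≤ t → x t = x0 (t - tt) := by
  have hD : (0:ℝ) < a ^ 2 + 3 * a + 1 := by nlinarith
  have hθt0 : 0 < θt := by rw [hθt]; positivity
  have hθt1 : θt < 1 := by rw [hθt, div_lt_one hD]; nlinarith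
  have hτt0 : 0 < τt := by rw [hτt]; positivity
  have hτt1 : τt < 1 := by rw [hτt, div_lt_one hD]; nlinarith
  intro n
  induction n with
  | zero =>
    intro s θ τ _ hτ hτθ hθ hmax _ _ _ _ _ _
    exfalso
    simp only [pow_zero, one_mul] at hmax
    have h1 : |θ - θt| < 1 := abs_lt.2 ⟨by linarith, by linarith⟩
    have h2 : |τ - τt| < 1 := abs_lt.2 ⟨by linarith, by linarith⟩
    have := max_lt h1 h2
    linarith
  | succ n ih =>
    intro s θ τ hs hτ hτθ hθ hmax hxθ hxτ hxs hIco hIoo1 hIoo2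
    obtain ⟨m, hm_def⟩ : ∃ m : ℝ, m = 1 - θ - a * (θ - τ) := ⟨_, rfl⟩
    -- Piece 1 : slope 1 on [s, s+1-θ]
    have hP1 : ∀ t ∈ Set.Icc s (s + 1 - θ), x t = t - s := by
      have := piece_up hS hder hcont hs (by linarith : s ≤ s + 1 - θ)
        (fun t ht => (hIco (t - 1) (by linarith [ht.1]) (by linarith [ht.2])).le)
      intro t ht; have := this t ht; rw [hxs] at this; linarith
    have hv1 : x (s + 1 - θ) = 1 - θ := by
      have := hP1 (s + 1 - θ) ⟨by linarith, le_rfl⟩; linarith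
    -- Piece 2 : slope -a on [s+1-θ, s+1-τ]
    have hP2 : ∀ t ∈ Set.Icc (s + 1 - θ) (s + 1 - τ),
        x t = (1 - θ) - a * (t - (s + 1 - θ)) := by
      have := piece_down hS hder hcont (by linarith : (0:ℝ) ≤ s + 1 - θ)
        (by linarith : s + 1 - θ ≤ s + 1 - τ) (∅ : Finset ℝ)
        (fun t ht _ => hIoo1 (t - 1) (by linarith [ht.1]) (by linarith [ht.2]))
      intro t ht; have := this t ht; rw [hv1] at this; linarith
    have hv2 : x (s + 1 - τ) = m := by
      have := hP2 (s + 1 - τ) ⟨by linarith, le_rfl⟩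
      rw [this, hm_def]; ring
    -- Piece 3 : slope 1 on [s+1-τ, s+1]
    have hP3 : ∀ t ∈ Set.Icc (s + 1 - τ) (s + 1), x t = m + (t - (s + 1 - τ)) := by
      have := piece_up hS hder hcont (by linarith : (0:ℝ) ≤ s + 1 - τ)
        (by linarith : s + 1 - τ ≤ s + 1)
        (fun t ht => (hIoo2 (t - 1) (by linarith [ht.1]) (by linarith [ht.2])).le)
      intro t ht; have := this t ht; rw [hv2] at this; linarith
    have hv3 : x (s + 1) = m + τ := by
      have := hP3 (s + 1) ⟨by linarith, le_rfl⟩; linarith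
    by_cases hm : 0 ≤ m
    · -- Terminal branch T1 : the pulse does not cross zero
      have hwin : ∀ t : ℝ, s < t → t < s + 1 → t ≠ s + 1 - τ → 0 < x t := by
        intro t ht1 ht2 htne
        rcases le_total t (s + 1 - θ) with h | h
        · have := hP1 t ⟨ht1.le, h⟩; linarith
        · rcases le_total t (s + 1 - τ) with h' | h'
          · have := hP2 t ⟨h, h'⟩
            have hlt : t < s + 1 - τ := lt_of_le_of_ne h' htne
            nlinarith
          · have := hP3 t ⟨h', ht2.le⟩
            have hlt : s + 1 - τ < t := lt_of_le_of_ne h' (Ne.symm htne)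
            nlinarith
      have hmτ : 0 < m + τ := by linarith
      obtain ⟨n1, hn1⟩ := exists_nat_ge ((m + τ) / a)
      have hn1' : m + τ ≤ n1 * a := by rw [div_le_iff₀ ha] at hn1; linarith
      obtain ⟨z, hz_def⟩ : ∃ z : ℝ, z = s + 1 + (m + τ) / a := ⟨_, rfl⟩
      have hzs : s + 1 < z := by
        have : 0 < (m + τ) / a := div_pos hmτ ha
        linarith [hz_def]
      have hza : a * (z - (s + 1)) = m + τ := by
        rw [hz_def]; field_simp; ring
      have hDes := descend ha hS hder hcont n1 (s + 1) (m + τ) (s + 1 - τ)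
        (by linarith) hmτ hn1'
        (fun t ht htne => hwin t (by linarith [ht.1]) ht.2 htne) hv3
      have hDes' : ∀ t : ℝ, s + 1 ≤ t → t ≤ z + 1 → x t = (m + τ) - a * (t - (s + 1)) := by
        intro t h1 h2
        exact hDes t ⟨h1, by linarith [hz_def]⟩
      have hxz1 : x (z + 1) = -a := by
        have h' := hDes' (z + 1) (by linarith) le_rfl
        have hr : (m + τ) - a * (z + 1 - (s + 1)) = (m + τ) - a * (z - (s + 1)) - a := by
          ring
        rw [h', hr]; linarith [hza]
      have hneg : ∀ t : ℝ, z < t → t ≤ z + 1 → x t < 0 := by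
        intro t h1 h2
        have h' := hDes' t (by linarith) h2
        have hmono : a * (z - (s + 1)) < a * (t - (s + 1)) :=
          mul_lt_mul_of_pos_left (by linarith) ha
        rw [h']; linarith [hza]
      obtain ⟨n2, hn2⟩ := exists_nat_ge a
      have hAsc := ascend ha hS hder hcont n2 (z + 1) (-a) (by linarith)
        (by linarith) (by simpa using hn2)
        (fun t ht => (hneg t (by linarith [ht.1]) ht.2.le).le) hxz1
      obtain ⟨w, hw_def⟩ : ∃ w : ℝ, w = z + 1 + a := ⟨_, rfl⟩
      have hxw : x w = 0 := by
        have := hAsc w ⟨by linarith [hw_def], by linarith [hw_def]⟩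
        rw [this]; linarith [hw_def]
      have hwwin : ∀ t ∈ Set.Ioo (w - 1) w, x t ≤ 0 := by
        intro t ht
        have ht1 : z + a < t := by linarith [ht.1, hw_def]
        have ht2 : t < z + 1 + a := by linarith [ht.2, hw_def]
        rcases le_total t (z + 1) with h | h
        · exact (hneg t (by linarith) h).le
        · have := hAsc t ⟨h, by linarith⟩
          rw [this]; linarith
      refine ⟨w, by linarith [hw_def], ?_⟩
      exact tail ha hS hder hcont ht0 hT0 hx0per hx0a hx0b hx0c w
        (by linarith [hw_def]) hxw hwwin
    · push_neg at hm
      -- m < 0 : the pulse crosses zero; zeros at s+u and (if v ≤ 1) s+v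
      obtain ⟨u, hu⟩ : ∃ u : ℝ, a * u = (1 - θ) * (a + 1) :=
        ⟨(1 - θ) * (a + 1) / a, by field_simp⟩
      obtain ⟨v, hv⟩ : ∃ v : ℝ, v = (a + 1) * (θ - τ) := ⟨_, rfl⟩
      have haupos : 0 < a * u := by
        rw [hu]; have h1 : 0 < 1 - θ := by linarith
        have h2 : 0 < a + 1 := by linarith
        exact mul_pos h1 h2
      have hupos : 0 < u := by
        rcases mul_pos_iff.1 haupos with h | h
        · exact h.2
        · linarith [h.1]
      have hu1θ : 1 - θ < u := by
        have h3 : a * (1 - θ) < a * u := by rw [hu]; linarith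
        exact lt_of_mul_lt_mul_left h3 ha.le
      have hu1τ : u < 1 - τ := by
        have h4 : a * u < a * (1 - τ) := by rw [hu]; linarith [hm, hm_def]
        exact lt_of_mul_lt_mul_left h4 ha.le
      have hv1τ : 1 - τ < v := by rw [hv]; linarith [hm, hm_def]
      have huv : u < v := by linarith
      have hvm : v = 1 - τ - m := by rw [hv, hm_def]; ring
      have hx_u : x (s + u) = 0 := by
        have h' := hP2 (s + u) ⟨by linarith, by linarith⟩
        rw [h']; linarith [hu]
      have hpos_su : ∀ t : ℝ, s < t → t < s + u → 0 < x t := by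
        intro t ht1 ht2
        rcases le_total t (s + 1 - θ) with h | h
        · have := hP1 t ⟨ht1.le, h⟩; linarith
        · have h' := hP2 t ⟨h, by linarith⟩
          have hmono : a * (t - (s + 1 - θ)) < a * (u - (1 - θ)) :=
            mul_lt_mul_of_pos_left (by linarith) ha
          linarith [h', hmono, hu]
      have hneg_u : ∀ t : ℝ, s + u < t → t ≤ s + 1 → t < s + v → x t < 0 := by
        intro t ht1 ht2 ht3
        rcases le_total t (s + 1 - τ) with h | h
        · have h' := hP2 t ⟨by linarith, h⟩
          have hmono : a * (u - (1 - θ)) < a * (t - (s + 1 - θ)) :=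
            mul_lt_mul_of_pos_left (by linarith) ha
          linarith [h', hmono, hu]
        · have h' := hP3 t ⟨h, ht2⟩
          rw [h']; linarith [hvm]
      have hpos_v1 : ∀ t : ℝ, s + v < t → t ≤ s + 1 → 0 < x t := by
        intro t ht1 ht2
        have h' := hP3 t ⟨by linarith, ht2⟩
        rw [h']; linarith [hvm]
      by_cases hvc : 1 ≤ v
      · -- Terminal branch T2a : x(s+1) ≤ 0, single recovery
        have hQ1 : ∀ t ∈ Set.Icc (s + 1) (s + 1 + u), x t = (m + τ) - a * (t - (s + 1)) := by
          have := piece_down hS hder hcont (by linarith : (0:ℝ) ≤ s + 1)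
            (by linarith : s + 1 ≤ s + 1 + u) (∅ : Finset ℝ)
            (fun t ht _ => hpos_su (t - 1) (by linarith [ht.1]) (by linarith [ht.2]))
          intro t ht; have := this t ht; rw [hv3] at this; linarith
        have hmτv : m + τ = 1 - v := by linarith [hvm]
        have hx1u : x (s + 1 + u) = (m + τ) - a * u := by
          have := hQ1 (s + 1 + u) ⟨by linarith, le_rfl⟩
          rw [this]; ring
        have hx1uneg : (m + τ) - a * u < 0 := by
          linarith [hmτv, mul_pos ha hupos]
        have hneg2 : ∀ t : ℝ, s + u < t → t ≤ s + 1 + u → x t ≤ 0 := by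
          intro t ht1 ht2
          rcases lt_trichotomy t (s + 1) with h | h | h
          · exact (hneg_u t ht1 h.le (by linarith)).le
          · rw [h, hv3]; linarith
          · have := hQ1 t ⟨h.le, ht2⟩
            rw [this]
            linarith [hmτv, mul_nonneg ha.le (show (0:ℝ) ≤ t - (s + 1) by linarith)]
        obtain ⟨n3, hn3⟩ := exists_nat_ge (a * u + v - 1)
        have hAsc := ascend ha hS hder hcont n3 (s + 1 + u) ((m + τ) - a * u)
          (by linarith) hx1uneg (by linarith [hn3, hmτv])
          (fun t ht => hneg2 t (by linarith [ht.1]) ht.2.le) hx1u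
        obtain ⟨w, hw_def⟩ : ∃ w : ℝ, w = s + 1 + u - ((m + τ) - a * u) := ⟨_, rfl⟩
        have hxw : x w = 0 := by
          have := hAsc w ⟨by linarith [hw_def], by linarith [hw_def]⟩
          rw [this]; linarith [hw_def]
        have hw1 : s + u < w - 1 := by
          -- w - 1 = s + u + (a*u + v - 1) and a*u + v > 1 here
          have hwe : w = s + u + a * u + v := by rw [hw_def, hmτv]; ring
          linarith [hwe, mul_pos ha hupos, hvc]
        have hwwin : ∀ t ∈ Set.Ioo (w - 1) w, x t ≤ 0 := by
          intro t ht
          rcases le_total t (s + 1 + u) with h | h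
          · exact hneg2 t (by linarith [ht.1, hw1]) h
          · have := hAsc t ⟨h, by linarith [ht.2]⟩
            rw [this]; linarith [ht.2, hw_def]
        refine ⟨w, by linarith [hw_def, hx1uneg], ?_⟩
        exact tail ha hS hder hcont ht0 hT0 hx0per hx0a hx0b hx0c w
          (by linarith [hw_def, hx1uneg]) hxw hwwin
      · push_neg at hvc
        have hmτv : m + τ = 1 - v := by linarith [hvm]
        have hx_v : x (s + v) = 0 := by
          have h' := hP3 (s + v) ⟨by linarith, by linarith⟩
          rw [h']; linarith [hvm]
        have hQ1 : ∀ t ∈ Set.Icc (s + 1) (s + 1 + u), x t = (m + τ) - a * (t - (s + 1)) := by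
          have := piece_down hS hder hcont (by linarith : (0:ℝ) ≤ s + 1)
            (by linarith : s + 1 ≤ s + 1 + u) (∅ : Finset ℝ)
            (fun t ht _ => hpos_su (t - 1) (by linarith [ht.1]) (by linarith [ht.2]))
          intro t ht; have := this t ht; rw [hv3] at this; linarith
        have hx1u : x (s + 1 + u) = (m + τ) - a * u := by
          have := hQ1 (s + 1 + u) ⟨by linarith, le_rfl⟩
          rw [this]; ring
        by_cases hb : a * u + v ≤ 1
        · -- Terminal branch T2b : pulse does not cross zero again
          have hx1unn : 0 ≤ (m + τ) - a * u := by linarith [hmτv, hb]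
          have hposQ1 : ∀ t : ℝ, s + 1 ≤ t → t < s + 1 + u → 0 < x t := by
            intro t ht1 ht2
            have h' := hQ1 t ⟨ht1, by linarith⟩
            have hmono : a * (t - (s + 1)) < a * u :=
              mul_lt_mul_of_pos_left (by linarith) ha
            linarith [h', hmono, hx1unn]
          have hQ2 : ∀ t ∈ Set.Icc (s + 1 + u) (s + 1 + v),
              x t = ((m + τ) - a * u) + (t - (s + 1 + u)) := by
            have := piece_up hS hder hcont (by linarith : (0:ℝ) ≤ s + 1 + u)
              (by linarith : s + 1 + u ≤ s + 1 + v)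
              (fun t ht => (hneg_u (t - 1) (by linarith [ht.1]) (by linarith [ht.2])
                (by linarith [ht.2])).le)
            intro t ht; have := this t ht; rw [hx1u] at this; linarith
          have hq : x (s + 1 + v) = 1 - a * u - u := by
            have := hQ2 (s + 1 + v) ⟨by linarith, le_rfl⟩
            rw [this]; linarith [hmτv]
          have hqpos : 0 < 1 - a * u - u := by linarith [hb, huv]
          have hposQ2 : ∀ t : ℝ, s + 1 + u < t → t ≤ s + 1 + v → 0 < x t := by
            intro t ht1 ht2
            have := hQ2 t ⟨ht1.le, ht2⟩
            rw [this]; linarith [hx1unn]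
          obtain ⟨n3, hn3⟩ := exists_nat_ge ((1 - a * u - u) / a)
          have hn3' : 1 - a * u - u ≤ n3 * a := by rw [div_le_iff₀ ha] at hn3; linarith
          have hwin2 : ∀ t : ℝ, s + v < t → t < s + 1 + v → t ≠ s + 1 + u → 0 < x t := by
            intro t ht1 ht2 hne
            rcases le_total t (s + 1) with h | h
            · exact hpos_v1 t ht1 h
            · rcases lt_trichotomy t (s + 1 + u) with h' | h' | h'
              · exact hposQ1 t h h'
              · exact absurd h' hne
              · exact hposQ2 t h' ht2.le
          have hDes := descend ha hS hder hcont n3 (s + 1 + v) (1 - a * u - u) (s + 1 + u)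
            (by linarith) hqpos hn3'
            (fun t ht hne => hwin2 t (by linarith [ht.1]) ht.2 hne) hq
          obtain ⟨z, hz_def⟩ : ∃ z : ℝ, z = s + 1 + v + (1 - a * u - u) / a := ⟨_, rfl⟩
          have hza : a * (z - (s + 1 + v)) = 1 - a * u - u := by
            rw [hz_def]; field_simp; ring
          have hzc : s + 1 + v < z := by
            have h0 : 0 < a * (z - (s + 1 + v)) := by rw [hza]; exact hqpos
            rcases mul_pos_iff.1 h0 with h | h
            · linarith [h.2]
            · linarith [h.1]
          have hDes' : ∀ t : ℝ, s + 1 + v ≤ t → t ≤ z + 1 →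
              x t = (1 - a * u - u) - a * (t - (s + 1 + v)) := by
            intro t h1 h2
            exact hDes t ⟨h1, by linarith [hz_def]⟩
          have hxz1 : x (z + 1) = -a := by
            have h' := hDes' (z + 1) (by linarith) le_rfl
            have hr : (1 - a * u - u) - a * (z + 1 - (s + 1 + v)) =
                (1 - a * u - u) - a * (z - (s + 1 + v)) - a := by ring
            rw [h', hr]; linarith [hza]
          have hneg : ∀ t : ℝ, z < t → t ≤ z + 1 → x t < 0 := by
            intro t h1 h2
            have h' := hDes' t (by linarith) h2
            have hmono : a * (z - (s + 1 + v)) < a * (t - (s + 1 + v)) :=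
              mul_lt_mul_of_pos_left (by linarith) ha
            rw [h']; linarith [hza]
          obtain ⟨n4, hn4⟩ := exists_nat_ge a
          have hAsc := ascend ha hS hder hcont n4 (z + 1) (-a) (by linarith)
            (by linarith) (by simpa using hn4)
            (fun t ht => (hneg t (by linarith [ht.1]) ht.2.le).le) hxz1
          obtain ⟨w, hw_def⟩ : ∃ w : ℝ, w = z + 1 + a := ⟨_, rfl⟩
          have hxw : x w = 0 := by
            have := hAsc w ⟨by linarith [hw_def], by linarith [hw_def]⟩
            rw [this]; linarith [hw_def]
          have hwwin : ∀ t ∈ Set.Ioo (w - 1) w, x t ≤ 0 := by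
            intro t ht
            have ht1 : z + a < t := by linarith [ht.1, hw_def]
            have ht2 : t < z + 1 + a := by linarith [ht.2, hw_def]
            rcases le_total t (z + 1) with h | h
            · exact (hneg t (by linarith) h).le
            · have := hAsc t ⟨h, by linarith⟩
              rw [this]; linarith
          refine ⟨w, by linarith [hw_def], ?_⟩
          exact tail ha hS hder hcont ht0 hT0 hx0per hx0a hx0b hx0c w
            (by linarith [hw_def]) hxw hwwin
        · push_neg at hb
          -- the pulse crosses zero again at z1 ∈ (s+1, s+1+u)
          obtain ⟨z1, hz1_def⟩ : ∃ z1 : ℝ, z1 = s + 1 + (1 - v) / a := ⟨_, rfl⟩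
          have hz1a : a * (z1 - (s + 1)) = 1 - v := by rw [hz1_def]; field_simp; ring
          have hz1l : s + 1 < z1 := by
            have h0 : 0 < a * (z1 - (s + 1)) := by rw [hz1a]; linarith
            rcases mul_pos_iff.1 h0 with h | h
            · linarith [h.2]
            · linarith [h.1]
          have hz1r : z1 < s + 1 + u := by
            have h4 : a * (z1 - (s + 1)) < a * u := by rw [hz1a]; linarith [hb]
            have := lt_of_mul_lt_mul_left h4 ha.le
            linarith
          have hposQ1' : ∀ t : ℝ, s + 1 ≤ t → t < z1 → 0 < x t := by
            intro t ht1 ht2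
            have h' := hQ1 t ⟨ht1, by linarith⟩
            have hmono : a * (t - (s + 1)) < a * (z1 - (s + 1)) :=
              mul_lt_mul_of_pos_left (by linarith) ha
            linarith [h', hmono, hz1a, hmτv]
          have hxz1 : x z1 = 0 := by
            have h' := hQ1 z1 ⟨hz1l.le, hz1r.le⟩
            rw [h']; linarith [hz1a, hmτv]
          have hnegQ1 : ∀ t : ℝ, z1 < t → t ≤ s + 1 + u → x t < 0 := by
            intro t ht1 ht2
            have h' := hQ1 t ⟨by linarith, ht2⟩
            have hmono : a * (z1 - (s + 1)) < a * (t - (s + 1)) :=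
              mul_lt_mul_of_pos_left (by linarith) ha
            linarith [h', hmono, hz1a, hmτv]
          have hQ2 : ∀ t ∈ Set.Icc (s + 1 + u) (s + 1 + v),
              x t = ((m + τ) - a * u) + (t - (s + 1 + u)) := by
            have := piece_up hS hder hcont (by linarith : (0:ℝ) ≤ s + 1 + u)
              (by linarith : s + 1 + u ≤ s + 1 + v)
              (fun t ht => (hneg_u (t - 1) (by linarith [ht.1]) (by linarith [ht.2])
                (by linarith [ht.2])).le)
            intro t ht; have := this t ht; rw [hx1u] at this; linarith
          have hq2v : x (s + 1 + v) = 1 - a * u - u := by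
            have := hQ2 (s + 1 + v) ⟨by linarith, le_rfl⟩
            rw [this]; linarith [hmτv]
          by_cases hc : 1 ≤ a * u + u
          · -- Terminal branch T2c : the pulse is not reborn
            have hq2np : 1 - a * u - u ≤ 0 := by linarith
            have hnegQ2 : ∀ t : ℝ, s + 1 + u ≤ t → t < s + 1 + v → x t < 0 := by
              intro t ht1 ht2
              have := hQ2 t ⟨ht1, by linarith⟩
              rw [this]; linarith [hmτv]
            have hQ3 : ∀ t ∈ Set.Icc (s + 1 + v) (z1 + 1),
                x t = (1 - a * u - u) - a * (t - (s + 1 + v)) := by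
              have := piece_down hS hder hcont (by linarith : (0:ℝ) ≤ s + 1 + v)
                (by linarith [hz1l] : s + 1 + v ≤ z1 + 1) (∅ : Finset ℝ)
                (fun t ht _ => by
                  rcases le_total (t - 1) (s + 1) with h | h
                  · exact hpos_v1 (t - 1) (by linarith [ht.1]) h
                  · exact hposQ1' (t - 1) h (by linarith [ht.2]))
              intro t ht; have := this t ht; rw [hq2v] at this; linarith
            have hval3 : x (z1 + 1) = (1 - a * u - u) - (1 - v) - a * (1 - v) := by
              have h' := hQ3 (z1 + 1) ⟨by linarith [hz1l], le_rfl⟩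
              have hr : a * (z1 + 1 - (s + 1 + v)) = a * (z1 - (s + 1)) + a * (1 - v) := by
                ring
              rw [h']; linarith [hz1a, hr]
            have hval3neg : (1 - a * u - u) - (1 - v) - a * (1 - v) < 0 := by
              linarith [hq2np, mul_pos ha (show (0:ℝ) < 1 - v by linarith), hvc]
            have hnegQ3 : ∀ t : ℝ, s + 1 + v ≤ t → t ≤ z1 + 1 → x t ≤ 0 := by
              intro t ht1 ht2
              have := hQ3 t ⟨ht1, ht2⟩
              rw [this]
              linarith [mul_nonneg ha.le (show (0:ℝ) ≤ t - (s + 1 + v) by linarith)]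
            have hwinz : ∀ t : ℝ, z1 < t → t ≤ z1 + 1 → x t ≤ 0 := by
              intro t ht1 ht2
              rcases le_total t (s + 1 + u) with h | h
              · exact (hnegQ1 t ht1 h).le
              · rcases lt_or_ge t (s + 1 + v) with h' | h'
                · exact (hnegQ2 t h h').le
                · exact hnegQ3 t h' ht2
            obtain ⟨n5, hn5⟩ := exists_nat_ge (-((1 - a * u - u) - (1 - v) - a * (1 - v)))
            have hAsc := ascend ha hS hder hcont n5 (z1 + 1)
              ((1 - a * u - u) - (1 - v) - a * (1 - v)) (by linarith [hz1l]) hval3neg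
              (by linarith [hn5])
              (fun t ht => hwinz t (by linarith [ht.1]) ht.2.le) hval3
            obtain ⟨w, hw_def⟩ :
                ∃ w : ℝ, w = z1 + 1 - ((1 - a * u - u) - (1 - v) - a * (1 - v)) := ⟨_, rfl⟩
            have hxw : x w = 0 := by
              have := hAsc w ⟨by linarith [hw_def, hval3neg], by linarith [hw_def, hval3neg]⟩
              rw [this]; linarith [hw_def]
            have hwwin : ∀ t ∈ Set.Ioo (w - 1) w, x t ≤ 0 := by
              intro t ht
              have hw1 : z1 < w - 1 := by linarith [hw_def, hval3neg]
              rcases le_total t (z1 + 1) with h | h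
              · exact hwinz t (by linarith [ht.1]) h
              · have := hAsc t ⟨h, by linarith [ht.2, hw_def]⟩
                rw [this]; linarith [ht.2, hw_def]
            refine ⟨w, by linarith [hw_def, hz1l, hval3neg], ?_⟩
            exact tail ha hS hder hcont ht0 hT0 hx0per hx0a hx0b hx0c w
              (by linarith [hw_def, hz1l, hval3neg]) hxw hwwin
          · -- Recursive branch T2d : a new pulse is born; apply the induction hypothesis
            push_neg at hc
            have hT0pos : 0 < T0 := by rw [hT0]; positivity
            obtain ⟨z2, hz2_def⟩ : ∃ z2 : ℝ, z2 = s + a * u + u + v := ⟨_, rfl⟩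
            obtain ⟨θ1, hθ1_def⟩ : ∃ θ1 : ℝ, θ1 = a * u + u := ⟨_, rfl⟩
            obtain ⟨τ1, hτ1_def⟩ : ∃ τ1 : ℝ, τ1 = z2 - z1 := ⟨_, rfl⟩
            have haupos' : 0 < a * u := haupos
            have hxz2 : x z2 = 0 := by
              have h' := hQ2 z2 ⟨by linarith [hz2_def, hb], by linarith [hz2_def, hc]⟩
              rw [h']; linarith [hmτv, hz2_def]
            have hθ1pos : 0 < θ1 := by linarith [hθ1_def, haupos, hupos]
            have hθ1lt : θ1 < 1 := by linarith [hθ1_def, hc]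
            have e0 : a * τ1 = a * (a * u + u + v - 1) - (1 - v) := by
              have e0' : a * τ1 = a * (z2 - (s + 1)) - a * (z1 - (s + 1)) := by
                rw [hτ1_def]; ring
              have e2 : a * (z2 - (s + 1)) = a * (a * u + u + v - 1) := by
                rw [hz2_def]; ring
              rw [e2, hz1a] at e0'; exact e0'
            have hτ1pos : 0 < τ1 := by
              have hmono : a * u < a * (a * u + u + v - 1) :=
                mul_lt_mul_of_pos_left (by linarith [hb]) ha
              have h0 : 0 < a * τ1 := by linarith [e0, hmono, hb]
              rcases mul_pos_iff.1 h0 with h | h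
              · exact h.2
              · linarith [h.1]
            have hτ1θ1 : τ1 < θ1 := by
              have : z2 - θ1 = s + v := by rw [hz2_def, hθ1_def]; ring
              linarith [hz1l, hτ1_def, this, hvc]
            have hz2pos : 0 ≤ z2 := by linarith [hz2_def, hb, hupos]
            have hxθ1 : x (z2 - θ1) = 0 := by
              have e : z2 - θ1 = s + v := by rw [hz2_def, hθ1_def]; ring
              rw [e]; exact hx_v
            have hxτ1 : x (z2 - τ1) = 0 := by
              have e : z2 - τ1 = z1 := by rw [hτ1_def]; ring
              rw [e]; exact hxz1
            have W1 : ∀ t : ℝ, z2 - 1 ≤ t → t < z2 - θ1 → x t < 0 := by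
              intro t ht1 ht2
              have e : z2 - θ1 = s + v := by rw [hz2_def, hθ1_def]; ring
              refine hneg_u t (by linarith [hz2_def, hb, ht1]) (by linarith [e, ht2, hvc])
                (by linarith [e, ht2])
            have W2 : ∀ t : ℝ, z2 - θ1 < t → t < z2 - τ1 → 0 < x t := by
              intro t ht1 ht2
              have e : z2 - θ1 = s + v := by rw [hz2_def, hθ1_def]; ring
              have e' : z2 - τ1 = z1 := by rw [hτ1_def]; ring
              rcases le_total t (s + 1) with h | h
              · exact hpos_v1 t (by linarith [e, ht1]) h
              · exact hposQ1' t h (by linarith [e', ht2])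
            have W3 : ∀ t : ℝ, z2 - τ1 < t → t < z2 → x t < 0 := by
              intro t ht1 ht2
              have e' : z2 - τ1 = z1 := by rw [hτ1_def]; ring
              rcases le_total t (s + 1 + u) with h | h
              · exact hnegQ1 t (by linarith [e', ht1]) h
              · have := hQ2 t ⟨h, by linarith [ht2, hz2_def, hc]⟩
                rw [this]; linarith [hmτv, hz2_def, ht2]
            -- the new pulse parameters contract toward the fixed point with factor T0
            have haT0 : a * T0 = (a + 1) ^ 2 := by rw [hT0]; field_simp
            have haθ1 : a * θ1 = (a + 1) * ((1 - θ) * (a + 1)) := by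
              have e : a * θ1 = (a + 1) * (a * u) := by rw [hθ1_def]; ring
              rw [hu] at e; exact e
            have hfixθ : a * θt = (a + 1) ^ 2 * (1 - θt) := by
              rw [hθt]; field_simp; ring
            have hrelθ : θ1 - θt = T0 * (θt - θ) := by
              refine mul_left_cancel₀ (ne_of_gt ha) ?_
              linear_combination haθ1 - hfixθ - (θt - θ) * haT0
            have haτ1 : a * τ1 = (a + 1) ^ 2 * (1 - τ) - (a + 1) := by
              linear_combination e0 + (a + 1) * hu + (a + 1) * hv
            have hfixτ : a * τt = (a + 1) ^ 2 * (1 - τt) - (a + 1) := by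
              rw [hτt]; field_simp; ring
            have hrelτ : τ1 - τt = T0 * (τt - τ) := by
              refine mul_left_cancel₀ (ne_of_gt ha) ?_
              linear_combination haτ1 - hfixτ - (τt - τ) * haT0
            have habsθ : |θ1 - θt| = T0 * |θ - θt| := by
              rw [hrelθ, abs_mul, abs_of_pos hT0pos, abs_sub_comm θt θ]
            have habsτ : |τ1 - τt| = T0 * |τ - τt| := by
              rw [hrelτ, abs_mul, abs_of_pos hT0pos, abs_sub_comm τt τ]
            have hmax' : max |θ1 - θt| |τ1 - τt| = T0 * max |θ - θt| |τ - τt| := by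
              rw [habsθ, habsτ]
              rcases le_total |θ - θt| |τ - τt| with h | h
              · rw [max_eq_right h, max_eq_right (mul_le_mul_of_nonneg_left h hT0pos.le)]
              · rw [max_eq_left h, max_eq_left (mul_le_mul_of_nonneg_left h hT0pos.le)]
            have hmeas : 1 ≤ T0 ^ n * max |θ1 - θt| |τ1 - τt| := by
              rw [hmax']
              have e : T0 ^ n * (T0 * max |θ - θt| |τ - τt|) =
                  T0 ^ (n + 1) * max |θ - θt| |τ - τt| := by rw [pow_succ]; ring
              linarith [hmax, e]
            exact ih z2 θ1 τ1 hz2pos hτ1pos hτ1θ1 hθ1lt hmeas hxθ1 hxτ1 hxz2 W1 W2 W3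

/-- for `0 < τ < θ < 1` with `(θ,τ) ≠ (θ̃,τ̃)`, a solution with an
initial function having zeros exactly at `-θ`, `-τ` and `0` (with the indicated
signs in between) eventually coincides with a time shift of the `T0`-periodic
solution `x0`: there is `t̃ ≥ 0` with `x t = x0 (t - t̃)` for all `t ≥ t̃`. -/
theorem stmt_8 (a : ℝ) (ha : 0 < a) (θt τt : ℝ)
    (hθt : θt = (a + 1) ^ 2 / (a ^ 2 + 3 * a + 1))
    (hτt : τt = a * (a + 1) / (a ^ 2 + 3 * a + 1))
    (θ τ : ℝ) (hτθ : 0 < τ ∧ τ < θ ∧ θ < 1) (hne : (θ, τ) ≠ (θt, τt))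
    (t0 T0 : ℝ) (ht0 : t0 = (a + 1) / a) (hT0 : T0 = (a + 1) ^ 2 / a)
    (φ : ℝ → ℝ) (hφc : ContinuousOn φ (Set.Icc (-1 : ℝ) 0))
    (hφ1 : ∀ t ∈ Set.Ico (-1 : ℝ) (-θ), φ t < 0) (hφθ : φ (-θ) = 0)
    (hφ2 : ∀ t ∈ Set.Ioo (-θ) (-τ), 0 < φ t) (hφτ : φ (-τ) = 0)
    (hφ3 : ∀ t ∈ Set.Ioo (-τ) (0 : ℝ), φ t < 0) (hφ0 : φ 0 = 0)
    (x : ℝ → ℝ) (hx : IsSolution a φ x)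
    (x0 : ℝ → ℝ)
    (hx0per : ∀ t : ℝ, x0 (t + T0) = x0 t)
    (hx0a : ∀ t ∈ Set.Icc (0 : ℝ) 1, x0 t = t)
    (hx0b : ∀ t ∈ Set.Icc (1 : ℝ) (t0 + 1), x0 t = -a * (t - t0))
    (hx0c : ∀ t ∈ Set.Icc (t0 + 1) T0, x0 t = t - T0) :
    ∃ tt : ℝ, 0 ≤ tt ∧ ∀ t : ℝ, tt ≤ t → x t = x0 (t - tt) := by
  obtain ⟨hτ0, hτθ', hθ1⟩ := hτθ
  obtain ⟨hcont, hphi, S, hS, hder⟩ := hx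
  -- transfer the initial data from φ to x
  have hxθ : x ((0:ℝ) - θ) = 0 := by
    rw [show (0:ℝ) - θ = -θ by ring, hphi (-θ) ⟨by linarith, by linarith⟩]; exact hφθ
  have hxτ : x ((0:ℝ) - τ) = 0 := by
    rw [show (0:ℝ) - τ = -τ by ring, hphi (-τ) ⟨by linarith, by linarith⟩]; exact hφτ
  have hx00 : x (0:ℝ) = 0 := by
    rw [hphi 0 ⟨by linarith, le_rfl⟩]; exact hφ0
  have hIco : ∀ t : ℝ, (0:ℝ) - 1 ≤ t → t < (0:ℝ) - θ → x t < 0 := by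
    intro t h1 h2
    rw [hphi t ⟨by linarith, by linarith⟩]
    exact hφ1 t ⟨by linarith, by linarith⟩
  have hIoo1 : ∀ t : ℝ, (0:ℝ) - θ < t → t < (0:ℝ) - τ → 0 < x t := by
    intro t h1 h2
    rw [hphi t ⟨by linarith, by linarith⟩]
    exact hφ2 t ⟨by linarith, by linarith⟩
  have hIoo2 : ∀ t : ℝ, (0:ℝ) - τ < t → t < (0:ℝ) → x t < 0 := by
    intro t h1 h2
    rw [hphi t ⟨by linarith, by linarith⟩]
    exact hφ3 t ⟨by linarith, by linarith⟩
  -- positive distance from the fixed point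
  have hneθτ : θ ≠ θt ∨ τ ≠ τt := by
    by_contra h
    push_neg at h
    exact hne (by rw [h.1, h.2])
  have hδpos : 0 < max |θ - θt| |τ - τt| := by
    rcases hneθτ with h | h
    · exact lt_of_lt_of_le (abs_pos.2 (sub_ne_zero.2 h)) (le_max_left _ _)
    · exact lt_of_lt_of_le (abs_pos.2 (sub_ne_zero.2 h)) (le_max_right _ _)
  have hT0gt1 : 1 < T0 := by
    rw [hT0, lt_div_iff₀ ha]; nlinarith
  obtain ⟨n, hn⟩ := pow_unbounded_of_one_lt (1 / max |θ - θt| |τ - τt|) hT0gt1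
  have hmeas : 1 ≤ T0 ^ n * max |θ - θt| |τ - τt| := by
    rw [div_lt_iff₀ hδpos] at hn; linarith
  exact main_ind ha hS hder hcont ht0 hT0 hθt hτt hx0per hx0a hx0b hx0c n 0 θ τ
    le_rfl hτ0 hτθ' hθ1 hmeas hxθ hxτ hx00 hIco hIoo1 hIoo2
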